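/- A Lorentzian S-manifold (M, φ, ξ_α, η^α, g) of dimension 2n+s with s ≥ 2 is never null Osserman with respect to (ξ_1)_p at any point p: there exist u, v ∈ N((ξ_1)_p) whose Jacobi operators R̄_u and R̄_v have different eigenvalue structure (R̄_u = 0 for u = ξ_1+ξ_2, while R̄_v(ξ̄_β) = Σ_{α=2}^s ξ̄_α ≠ 0 for v = ξ_1 + x with x a unit vector in Im(φ_p)). -/

import Mathlib

/-- A symmetric bilinear form on a real vector space is *Lorentzian* if it admits an
orthonormal basis with exactly one timelike vector. -/
def IsLorentzian {V : Type*} [AddCommGroup V] [Module ℝ V]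
    (g : V →ₗ[ℝ] V →ₗ[ℝ] ℝ) : Prop :=
  ∃ (n : ℕ) (b : Module.Basis (Fin (n + 1)) ℝ V), ∀ i j,
    g (b i) (b j) = if i = j then (if i = 0 then (-1 : ℝ) else 1) else 0

/-- A Lorentzian `S`-manifold with `s = s₀ + 2 ≥ 2` characteristic vector fields is
never null Osserman with respect to `ξ_1` (indexed here by `0`): for `u = ξ_1 + ξ_2`
and `v = ξ_1 + x` (with `x` a unit vector of `Im φ`), both in `N(ξ_1)`, the Jacobi
operator `R̄_u` vanishes while `R̄_v(ξ̄_β) = ∑_{α=2}^s ξ̄_α ≠ 0` for every `β ≥ 2`.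
Here `R13 z w y = R(z,w)y` and `R(X,Y,Z,W) = g(R(Z,W)Y,X)`; classes in
`v̄^⊥ = v^⊥/span(v)` are represented via membership in `span(v)`. -/
theorem lorentzian_sManifold_not_null_osserman
    {V : Type*} [AddCommGroup V] [Module ℝ V] [FiniteDimensional ℝ V]
    (g : V →ₗ[ℝ] V →ₗ[ℝ] ℝ) (hgsymm : ∀ x y, g x y = g y x)
    (hgL : IsLorentzian g)
    {s₀ : ℕ}
    (φ : V →ₗ[ℝ] V) (ξ : Fin (s₀ + 2) → V) (η : Fin (s₀ + 2) → V →ₗ[ℝ] ℝ)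
    (ε : Fin (s₀ + 2) → ℝ)
    (hphi2 : ∀ x, φ (φ x) = -x + ∑ α, η α x • ξ α)
    (hηξ : ∀ α β, η α (ξ β) = if α = β then 1 else 0)
    (hφξ : ∀ α, φ (ξ α) = 0) (hηφ : ∀ α x, η α (φ x) = 0)
    (hε0 : ε 0 = -1) (hεpos : ∀ α, α ≠ 0 → ε α = 1)
    (hgξξ : ∀ α β, g (ξ α) (ξ β) = if α = β then ε α else 0)
    (hgxi : ∀ α (x : V), g x (ξ α) = ε α * η α x)
    (hmetriccompat : ∀ x y, g (φ x) (φ y) = g x y - ∑ α, ε α * (η α x * η α y))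
    (R13 : V →ₗ[ℝ] V →ₗ[ℝ] V →ₗ[ℝ] V)
    -- curvature symmetries of `R(X,Y,Z,W) = g(R13 Z W Y, X)`
    (hpair : ∀ x y z w : V, g (R13 z w y) x = g (R13 x y w) z)
    (hanti1 : ∀ x y z w : V, g (R13 z w y) x = - g (R13 z w x) y)
    (hanti2 : ∀ x y z w : V, g (R13 z w y) x = - g (R13 w z y) x)
    (hbianchi : ∀ x y z w : V,
      g (R13 z w y) x + g (R13 x w z) y + g (R13 y w x) z = 0)
    -- curvature identities of the Lorentzian `S`-structure
    (hRIm : ∀ x y z : V, (∀ γ, η γ x = 0) → (∀ γ, η γ y = 0) → (∀ γ, η γ z = 0) →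
      ∀ α β,
        g (R13 z (ξ α) y) x = 0 ∧ g (R13 y (ξ β) (ξ α)) x = ε α * ε β * g x y)
    (hRξ : ∀ α β (y z : V),
      g (R13 (ξ α) z y) (ξ β) = ε β * ε α * g (φ y) (φ z))
    (hRξξ : ∀ α β γ (z : V), g (R13 (ξ α) z (ξ γ)) (ξ β) = 0)
    (x : V) (hx : ∀ γ, η γ x = 0) (hxx : g x x = 1) :
    -- `u = ξ_1 + ξ_2` and `v = ξ_1 + x` both lie in `N(ξ_1)`
    (g (ξ 0 + ξ 1) (ξ 0 + ξ 1) = 0 ∧ g (ξ 0 + ξ 1) (ξ 0) = -1) ∧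
    (g (ξ 0 + x) (ξ 0 + x) = 0 ∧ g (ξ 0 + x) (ξ 0) = -1) ∧
    -- `R̄_u = 0`
    (∀ y : V, g y (ξ 0 + ξ 1) = 0 →
      R13 y (ξ 0 + ξ 1) (ξ 0 + ξ 1) ∈ Submodule.span ℝ {ξ 0 + ξ 1}) ∧
    -- `R̄_v(ξ̄_β) = ∑_{α=2}^s ξ̄_α`
    (∀ β : Fin (s₀ + 2), β ≠ 0 →
      R13 (ξ β) (ξ 0 + x) (ξ 0 + x) - ∑ α ∈ Finset.univ.filter (· ≠ (0 : Fin (s₀ + 2))), ξ α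
        ∈ Submodule.span ℝ {ξ 0 + x}) ∧
    -- `∑_{α=2}^s ξ̄_α ≠ 0`
    (∑ α ∈ Finset.univ.filter (· ≠ (0 : Fin (s₀ + 2))), ξ α)
      ∉ Submodule.span ℝ {ξ 0 + x} := by
    classical
  -- nondegeneracy of g
  obtain ⟨n, b, hb⟩ := hgL
  have nondeg : ∀ v : V, (∀ w, g v w = 0) → v = 0 := by
    intro v hv
    have hrepr : ∀ i, b.repr v i = 0 := by
      intro i
      have h1 : g v (b i) = 0 := hv (b i)
      nth_rewrite 1 [← b.sum_repr v] at h1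
      rw [map_sum] at h1
      simp only [map_smul, LinearMap.coe_sum, Finset.sum_apply, LinearMap.smul_apply,
        smul_eq_mul, hb, mul_ite, mul_zero, Finset.sum_ite_eq', Finset.mem_univ, if_true] at h1
      rcases eq_or_ne i 0 with rfl | h
      · simpa using h1
      · simpa [h] using h1
    have h0 : b.repr v = 0 := by ext i; simp [hrepr i]
    have h2 := congrArg b.repr.symm h0
    simpa using h2
  have h1ne0 : (1 : Fin (s₀ + 2)) ≠ 0 := by
    intro h
    have := congrArg Fin.val h
    simp [Fin.val_one] at this
  have hε1 : ε 1 = 1 := hεpos 1 h1ne0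
  -- Lemma 1 : g (R13 z (ξ a) (ξ b)) w = ε a * ε b * g (φ w) (φ z)
  have L1 : ∀ (a c : Fin (s₀ + 2)) (z w : V),
      g (R13 z (ξ a) (ξ c)) w = ε a * ε c * g (φ w) (φ z) := by
    intro a c z w
    rw [hanti1 w (ξ c) z (ξ a), hanti2 (ξ c) w z (ξ a), neg_neg, hRξ a c w z]
    ring
  -- Lemma 2 : g (R13 (ξ a) (ξ c) y) w = 0
  have L2 : ∀ (a c : Fin (s₀ + 2)) (y w : V), g (R13 (ξ a) (ξ c) y) w = 0 := by
    intro a c y w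
    have hB := hbianchi w y (ξ a) (ξ c)
    have e2 : g (R13 w (ξ c) (ξ a)) y = ε a * ε c * g (φ y) (φ w) := by
      rw [hanti1 y (ξ a) w (ξ c), hanti2 (ξ a) y w (ξ c), neg_neg, hRξ c a y w]
    have e3 : g (R13 y (ξ c) w) (ξ a) = -(ε a * ε c * g (φ w) (φ y)) := by
      rw [hanti2 (ξ a) w y (ξ c), hRξ c a w y]
    have hs := hgsymm (φ y) (φ w)
    rw [e2, e3, hs] at hB
    linarith
  have hφxx : g (φ x) (φ x) = 1 := by
    rw [hmetriccompat x x]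
    simp [hx, hxx]
  -- the four conclusions
  refine ⟨⟨?_, ?_⟩, ⟨?_, ?_⟩, ?_, ?_, ?_⟩
  · simp only [map_add, LinearMap.add_apply, hgξξ]
    have h01 : (0 : Fin (s₀ + 2)) ≠ 1 := Ne.symm h1ne0
    simp [h01, h1ne0, hε0, hε1]
  · simp only [map_add, LinearMap.add_apply, hgξξ]
    have h01 : (0 : Fin (s₀ + 2)) ≠ 1 := Ne.symm h1ne0
    simp [h01, h1ne0, hε0]
  · simp only [map_add, LinearMap.add_apply, hgξξ, hgxi]
    have hgx0 : g (ξ 0) x = 0 := by rw [hgsymm, hgxi]; simp [hx]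
    simp [hε0, hx, hxx, hgx0]
  · simp only [map_add, LinearMap.add_apply, hgξξ, hgxi]
    simp [hε0, hx]
  · -- R̄_u = 0 for u = ξ 0 + ξ 1
    intro y _
    have hz : R13 y (ξ 0 + ξ 1) (ξ 0 + ξ 1) = 0 := by
      apply nondeg
      intro w
      have hexp : R13 y (ξ 0 + ξ 1) (ξ 0 + ξ 1)
          = R13 y (ξ 0) (ξ 0) + R13 y (ξ 0) (ξ 1) + R13 y (ξ 1) (ξ 0) + R13 y (ξ 1) (ξ 1) := by
        simp only [map_add, LinearMap.add_apply]
        abel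
      rw [hexp]
      simp only [map_add, LinearMap.add_apply]
      rw [L1 0 0 y w, L1 0 1 y w, L1 1 0 y w, L1 1 1 y w, hε0, hε1]
      ring
    rw [hz]
    exact Submodule.zero_mem _
  · -- R̄_v (ξ̄ β) = ∑ ξ̄ α
    intro β hβ
    have hεβ : ε β = 1 := hεpos β hβ
    have key : R13 (ξ β) (ξ 0 + x) (ξ 0 + x)
        = (ξ 0 + x) + ∑ α ∈ Finset.univ.filter (· ≠ (0 : Fin (s₀ + 2))), ξ α := by
      have hdiff : ∀ w, g (R13 (ξ β) (ξ 0 + x) (ξ 0 + x)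
          - ((ξ 0 + x) + ∑ α ∈ Finset.univ.filter (· ≠ (0 : Fin (s₀ + 2))), ξ α)) w = 0 := by
        intro w
        -- decompose w
        set wI := w - ∑ γ, η γ w • ξ γ with hwIdef
        have hwI : ∀ γ, η γ wI = 0 := by
          intro γ
          simp only [hwIdef, map_sub, map_sum, map_smul, hηξ, smul_eq_mul, mul_ite, mul_one,
            mul_zero, Finset.sum_ite_eq, Finset.mem_univ, if_true]
          ring
        have hwdec : w = wI + ∑ γ, η γ w • ξ γ := by simp [hwIdef]
        -- term 1 : R(ξβ, ξ0)ξ0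
        have t1 : g (R13 (ξ β) (ξ 0) (ξ 0)) w = 0 := by
          rw [L1 0 0 (ξ β) w, hφξ]
          simp
        -- term 2 : R(ξβ, ξ0)x
        have t2 : g (R13 (ξ β) (ξ 0) x) w = 0 := L2 β 0 x w
        -- term 3 : R(ξβ, x)ξ0
        have t3 : g (R13 (ξ β) x (ξ 0)) w = g w x := by
          rw [hanti1 w (ξ 0) (ξ β) x, hRξ β 0 w x, hε0, hεβ, hmetriccompat w x]
          simp [hx]
        -- term 4 : R(ξβ, x)x
        have t4I : g (R13 (ξ β) x x) wI = 0 := by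
          rw [hpair wI x (ξ β) x, hanti2 (ξ β) x wI x, hpair (ξ β) x x wI,
            hanti2 x wI (ξ β) x, (hRIm x wI x hx hwI hx β β).1]
          simp
        have t4γ : ∀ γ, g (R13 (ξ β) x x) (ξ γ) = ε γ := by
          intro γ
          rw [hRξ β γ x x, hφxx, hεβ]
          ring
        have t4 : g (R13 (ξ β) x x) w = ∑ γ, η γ w * ε γ := by
          nth_rewrite 1 [hwdec]
          rw [map_add, map_sum]
          simp only [map_smul, smul_eq_mul, t4I, t4γ, zero_add]
        -- assemble g A w
        have hexp : R13 (ξ β) (ξ 0 + x) (ξ 0 + x)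
            = R13 (ξ β) (ξ 0) (ξ 0) + R13 (ξ β) (ξ 0) x + R13 (ξ β) x (ξ 0) + R13 (ξ β) x x := by
          simp only [map_add, LinearMap.add_apply]
          abel
        have hAw : g (R13 (ξ β) (ξ 0 + x) (ξ 0 + x)) w = g w x + ∑ γ, η γ w * ε γ := by
          rw [hexp]
          simp only [map_add, LinearMap.add_apply, t1, t2, t3, t4]
          ring
        -- the right-hand side
        have hξw : ∀ γ : Fin (s₀ + 2), g (ξ γ) w = η γ w * ε γ := by
          intro γ
          rw [hgsymm, hgxi]; ring
        have hxw : g x w = g w x := hgsymm x w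
        have hsplit : ∑ γ, η γ w * ε γ
            = η 0 w * ε 0 + ∑ γ ∈ Finset.univ.filter (· ≠ (0 : Fin (s₀ + 2))), η γ w * ε γ := by
          have hf : Finset.univ.filter (· ≠ (0 : Fin (s₀ + 2)))
              = Finset.univ.erase 0 := by
            ext γ; simp [Finset.mem_erase]
          rw [hf, ← Finset.add_sum_erase Finset.univ (fun γ => η γ w * ε γ) (Finset.mem_univ 0)]
        rw [map_sub, LinearMap.sub_apply, hAw, map_add, LinearMap.add_apply, map_add,
          LinearMap.add_apply, map_sum, LinearMap.coe_sum, Finset.sum_apply, hξw 0, hxw]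
        simp only [hξw]
        rw [hsplit]
        ring
      have := nondeg _ hdiff
      have h2 : R13 (ξ β) (ξ 0 + x) (ξ 0 + x)
          = (ξ 0 + x) + ∑ α ∈ Finset.univ.filter (· ≠ (0 : Fin (s₀ + 2))), ξ α := by
        exact sub_eq_zero.mp this
      exact h2
    rw [key]
    simp only [add_sub_cancel_right]
    exact Submodule.mem_span_singleton_self _
  · -- ∑ ξ α ∉ span {ξ 0 + x}
    rw [Submodule.mem_span_singleton]
    rintro ⟨c, hc⟩
    have h1 := congrArg (η 1) hc
    simp only [map_smul, map_add, map_sum, hηξ, smul_eq_mul, hx 1] at h1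
    have h2 : ∑ γ ∈ Finset.univ.filter (· ≠ (0 : Fin (s₀ + 2))),
        (if (1 : Fin (s₀ + 2)) = γ then (1 : ℝ) else 0) = 1 := by
      rw [Finset.sum_ite_eq]
      simp [h1ne0]
    rw [h2, if_neg h1ne0] at h1
    simp at h1
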